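/- (Submodularity of the GEV maximum capture objective) Under the assumptions that each G^i : ℝ^m → ℝ is twice continuously differentiable on the nonnegative orthant, nonnegative, with strictly positive first partial derivatives and nonpositive mixed second partial derivatives, q_i > 0, and Y^i has positive coordinates, the set function f(S) = ∑_{i∈I} q_i − ∑_{i∈I} q_i/(1 + G^i(x^S ∘ Y^i)) is submodular: f(A ∪ {j}) − f(A) ≥ f(B ∪ {j}) − f(B) for all A ⊆ B ⊆ {1,…,m} and j ∉ B. -/

import Mathlib

open Finset

private lemma udO (m : ℕ) : UniqueDiffOn ℝ {Z : Fin m → ℝ | ∀ k, 0 ≤ Z k} := by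
  have h : {Z : Fin m → ℝ | ∀ k, 0 ≤ Z k} = Set.pi Set.univ (fun _ => Set.Ici (0:ℝ)) := by
    ext Z; simp [Set.mem_pi, Pi.le_def]
  rw [h]
  exact UniqueDiffOn.univ_pi fun _ => uniqueDiffOn_Ici 0

private lemma clm_apply_nonneg {m : ℕ} (L : (Fin m → ℝ) →L[ℝ] ℝ)
    (h : ∀ k, 0 ≤ L (Pi.single k 1)) (v : Fin m → ℝ) (hv : ∀ k, 0 ≤ v k) : 0 ≤ L v := by
  have hv' : v = ∑ k : Fin m, v k • (Pi.single k 1 : Fin m → ℝ) := by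
    ext k
    simp [Finset.sum_apply, Pi.single_apply]
  rw [hv', map_sum]
  refine Finset.sum_nonneg fun k _ => ?_
  rw [map_smul, smul_eq_mul]
  exact mul_nonneg (hv k) (h k)

private lemma line_mono {m : ℕ} (F : (Fin m → ℝ) → ℝ)
    (hF : DifferentiableOn ℝ F {Z : Fin m → ℝ | ∀ k, 0 ≤ Z k})
    (Z v : Fin m → ℝ) (hZ : ∀ k, 0 ≤ Z k) (hv : ∀ k, 0 ≤ v k)
    (hd : ∀ W : Fin m → ℝ, (∀ k, 0 ≤ W k) →
      0 ≤ fderivWithin ℝ F {Z : Fin m → ℝ | ∀ k, 0 ≤ Z k} W v) :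
    F Z ≤ F (Z + v) := by
  set O : Set (Fin m → ℝ) := {Z | ∀ k, 0 ≤ Z k} with hO
  set γ : ℝ → (Fin m → ℝ) := fun t => Z + t • v with hγ
  have hmaps : ∀ t ∈ Set.Icc (0:ℝ) 1, ∀ k, 0 ≤ γ t k := by
    intro t ht k
    have := mul_nonneg ht.1 (hv k)
    simpa [hγ] using add_nonneg (hZ k) this
  have hderiv : ∀ t ∈ Set.Icc (0:ℝ) 1,
      HasDerivWithinAt (F ∘ γ) (fderivWithin ℝ F O (γ t) v) (Set.Icc 0 1) t := by
    intro t ht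
    have h1 : HasDerivWithinAt γ v (Set.Icc 0 1) t := by
      have h2 : HasDerivAt (fun t : ℝ => Z + t • v) v t := by
        simpa using ((hasDerivAt_id t).smul_const v).const_add Z
      exact h2.hasDerivWithinAt
    have h2 : HasFDerivWithinAt F (fderivWithin ℝ F O (γ t)) O (γ t) :=
      (hF (γ t) (hmaps t ht)).hasFDerivWithinAt
    exact h2.comp_hasDerivWithinAt t h1 (fun s hs => hmaps s hs)
  have hmono : MonotoneOn (F ∘ γ) (Set.Icc (0:ℝ) 1) := by
    apply monotoneOn_of_deriv_nonneg (convex_Icc 0 1)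
    · exact fun t ht => (hderiv t ht).continuousWithinAt
    · intro t ht
      rw [interior_Icc] at ht
      exact ((hderiv t (Set.mem_Icc_of_Ioo ht)).hasDerivAt
        (Icc_mem_nhds ht.1 ht.2)).differentiableAt.differentiableWithinAt
    · intro t ht
      rw [interior_Icc] at ht
      rw [((hderiv t (Set.mem_Icc_of_Ioo ht)).hasDerivAt
        (Icc_mem_nhds ht.1 ht.2)).deriv]
      exact hd (γ t) (hmaps t (Set.mem_Icc_of_Ioo ht))
  have h := hmono (Set.left_mem_Icc.2 zero_le_one) (Set.right_mem_Icc.2 zero_le_one) zero_le_one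
  simpa [hγ] using h

private lemma line_anti {m : ℕ} (F : (Fin m → ℝ) → ℝ)
    (hF : DifferentiableOn ℝ F {Z : Fin m → ℝ | ∀ k, 0 ≤ Z k})
    (Z v : Fin m → ℝ) (hZ : ∀ k, 0 ≤ Z k) (hv : ∀ k, 0 ≤ v k)
    (hd : ∀ W : Fin m → ℝ, (∀ k, 0 ≤ W k) →
      fderivWithin ℝ F {Z : Fin m → ℝ | ∀ k, 0 ≤ Z k} W v ≤ 0) :
    F (Z + v) ≤ F Z := by
  have h := line_mono (fun W => -(F W)) hF.neg Z v hZ hv (fun W hW => by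
    rw [fderivWithin_fun_neg (udO m W hW)]
    simpa using hd W hW)
  simpa using h

private lemma key_ineq {a b a' b' : ℝ} (ha : 0 ≤ a) (hab : a ≤ b) (haa' : a ≤ a')
    (hbb' : b ≤ b') (hsub : b' - b ≤ a' - a) :
    1/(1+b) - 1/(1+b') ≤ 1/(1+a) - 1/(1+a') := by
  have h1a : (0:ℝ) < 1 + a := by linarith
  have h1b : (0:ℝ) < 1 + b := by linarith
  have h1a' : (0:ℝ) < 1 + a' := by linarith
  have h1b' : (0:ℝ) < 1 + b' := by linarith
  rw [div_sub_div _ _ (ne_of_gt h1b) (ne_of_gt h1b'),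
    div_sub_div _ _ (ne_of_gt h1a) (ne_of_gt h1a'),
    div_le_div_iff₀ (by positivity) (by positivity)]
  nlinarith [mul_nonneg (sub_nonneg.2 hbb') (sub_nonneg.2 hab),
    mul_nonneg (mul_nonneg (sub_nonneg.2 hbb') (sub_nonneg.2 hab)) (by linarith : (0:ℝ) ≤ a + b + 2),
    mul_nonneg (sub_nonneg.2 hsub) (mul_nonneg h1b.le h1b'.le),
    mul_nonneg (mul_nonneg (sub_nonneg.2 hbb') (sub_nonneg.2 haa')) (sub_nonneg.2 hab)]

private lemma gev_core {m : ℕ} (g : (Fin m → ℝ) → ℝ)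
    (hdiff : ContDiffOn ℝ 2 g {Z : Fin m → ℝ | ∀ k, 0 ≤ Z k})
    (hpos : ∀ Z : Fin m → ℝ, (∀ k, 0 ≤ Z k) → ∀ k : Fin m,
      0 < fderivWithin ℝ g {W : Fin m → ℝ | ∀ k', 0 ≤ W k'} Z (Pi.single k 1))
    (hmixed : ∀ Z : Fin m → ℝ, (∀ k, 0 ≤ Z k) → ∀ j k : Fin m, j ≠ k →
      fderivWithin ℝ
        (fun W => fderivWithin ℝ g {V : Fin m → ℝ | ∀ k', 0 ≤ V k'} W (Pi.single j 1))
        {V : Fin m → ℝ | ∀ k', 0 ≤ V k'} Z (Pi.single k 1) ≤ 0) :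
    (∀ Z v : Fin m → ℝ, (∀ k, 0 ≤ Z k) → (∀ k, 0 ≤ v k) → g Z ≤ g (Z + v)) ∧
    (∀ Z v : Fin m → ℝ, (∀ k, 0 ≤ Z k) → (∀ k, 0 ≤ v k) → ∀ j : Fin m, v j = 0 →
      ∀ c : ℝ, 0 ≤ c →
      g (Z + v + c • (Pi.single j 1 : Fin m → ℝ)) - g (Z + v)
        ≤ g (Z + c • (Pi.single j 1 : Fin m → ℝ)) - g Z) := by
  set O : Set (Fin m → ℝ) := {Z | ∀ k, 0 ≤ Z k} with hOdef
  have hud : UniqueDiffOn ℝ O := udO m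
  have hgd : DifferentiableOn ℝ g O := hdiff.differentiableOn (by norm_num)
  -- monotonicity
  have hmono : ∀ Z v : Fin m → ℝ, (∀ k, 0 ≤ Z k) → (∀ k, 0 ≤ v k) → g Z ≤ g (Z + v) := by
    intro Z v hZ hv
    refine line_mono g hgd Z v hZ hv fun W hW => ?_
    exact clm_apply_nonneg _ (fun k => (hpos W hW k).le) v hv
  refine ⟨hmono, ?_⟩
  -- differentiability of the partial-derivative maps
  have hD : ContDiffOn ℝ 1 (fderivWithin ℝ g O) O := hdiff.fderivWithin hud (by norm_num)
  have hHkdiff : ∀ k : Fin m,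
      DifferentiableOn ℝ (fun W => fderivWithin ℝ g O W (Pi.single k 1)) O := by
    intro k
    exact (ContinuousLinearMap.apply ℝ ℝ ((Pi.single k 1 : Fin m → ℝ))).differentiable.comp_differentiableOn
      (hD.differentiableOn (by norm_num))
  -- lemma C: ∂ₖ g is antitone in direction e_j (j ≠ k)
  have hC : ∀ (k j : Fin m), j ≠ k → ∀ (c : ℝ), 0 ≤ c → ∀ W : Fin m → ℝ, (∀ k', 0 ≤ W k') →
      fderivWithin ℝ g O (W + c • (Pi.single j 1 : Fin m → ℝ)) (Pi.single k 1)
        ≤ fderivWithin ℝ g O W (Pi.single k 1) := by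
    intro k j hjk c hc W hW
    have hv : ∀ k', (0:ℝ) ≤ (c • (Pi.single j 1 : Fin m → ℝ)) k' := by
      intro k'
      simp only [Pi.smul_apply, Pi.single_apply, smul_eq_mul]
      positivity
    refine line_anti _ (hHkdiff k) W _ hW hv fun W' hW' => ?_
    have hsingle : (c • (Pi.single j 1 : Fin m → ℝ)) = c • (Pi.single j 1 : Fin m → ℝ) := rfl
    rw [map_smul, smul_eq_mul]
    exact mul_nonpos_of_nonneg_of_nonpos hc (hmixed W' hW' k j (Ne.symm hjk))
  -- submodular step along a nonneg direction avoiding j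
  intro Z v hZ hv j hvj c hc
  set u : Fin m → ℝ := c • (Pi.single j 1 : Fin m → ℝ) with hu
  have hu0 : ∀ k, 0 ≤ u k := by
    intro k
    simp only [hu, Pi.smul_apply, Pi.single_apply, smul_eq_mul]
    positivity
  have hF : DifferentiableOn ℝ (fun W => g (W + u) - g W) O := by
    have htr : DifferentiableOn ℝ (fun W : Fin m → ℝ => g (W + u)) O := by
      refine DifferentiableOn.comp hgd ((differentiable_id.add_const u).differentiableOn) ?_
      intro W hW k
      exact add_nonneg (hW k) (hu0 k)
    exact htr.sub hgd
  refine line_anti (fun W => g (W + u) - g W) hF Z v hZ hv fun W hW => ?_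
  have hWu : ∀ k, 0 ≤ (W + u) k := fun k => add_nonneg (hW k) (hu0 k)
  -- compute the derivative of the increment map
  have hτ : HasFDerivWithinAt (fun W : Fin m → ℝ => W + u)
      (ContinuousLinearMap.id ℝ (Fin m → ℝ)) O W := (hasFDerivWithinAt_id W O).add_const u
  have h1 : HasFDerivWithinAt (fun W : Fin m → ℝ => g (W + u))
      (fderivWithin ℝ g O (W + u)) O W := by
    have := (hgd (W + u) hWu).hasFDerivWithinAt.comp W hτ (by
      intro W' hW' k; exact add_nonneg (hW' k) (hu0 k))
    exact this
  have h2 : HasFDerivWithinAt g (fderivWithin ℝ g O W) O W := (hgd W hW).hasFDerivWithinAt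
  have h3 := (h1.fun_sub h2).fderivWithin (hud W hW)
  rw [h3, ContinuousLinearMap.sub_apply]
  -- expand v over basis
  have hv' : v = ∑ k : Fin m, v k • (Pi.single k 1 : Fin m → ℝ) := by
    ext k
    simp [Finset.sum_apply, Pi.single_apply]
  rw [hv', map_sum, map_sum, ← Finset.sum_sub_distrib]
  refine Finset.sum_nonpos fun k _ => ?_
  rw [map_smul, map_smul, smul_eq_mul, smul_eq_mul, ← mul_sub]
  rcases eq_or_ne k j with rfl | hkj
  · rw [hvj]; simp
  · refine mul_nonpos_of_nonneg_of_nonpos (hv k) ?_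
    rw [sub_nonpos]
    exact hC k j (Ne.symm hkj) c hc W hW

/-- Submodularity of the GEV maximum capture objective. -/
theorem gev_mcp_submodular (m : ℕ) (I : Type*) [Fintype I]
    (G : I → (Fin m → ℝ) → ℝ) (q : I → ℝ) (Y : I → Fin m → ℝ)
    (hq : ∀ i, 0 < q i) (hY : ∀ i j, 0 < Y i j)
    (hdiff : ∀ i, ContDiffOn ℝ 2 (G i) {Z : Fin m → ℝ | ∀ k, 0 ≤ Z k})
    (hGnonneg : ∀ i, ∀ Z : Fin m → ℝ, (∀ k, 0 ≤ Z k) → 0 ≤ G i Z)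
    (hGpos : ∀ i, ∀ Z : Fin m → ℝ, (∀ k, 0 ≤ Z k) → ∀ k : Fin m,
      0 < fderivWithin ℝ (G i) {W : Fin m → ℝ | ∀ k', 0 ≤ W k'} Z (Pi.single k 1))
    (hGmixed : ∀ i, ∀ Z : Fin m → ℝ, (∀ k, 0 ≤ Z k) → ∀ j k : Fin m, j ≠ k →
      fderivWithin ℝ
        (fun W => fderivWithin ℝ (G i) {V : Fin m → ℝ | ∀ k', 0 ≤ V k'} W
          (Pi.single j 1))
        {V : Fin m → ℝ | ∀ k', 0 ≤ V k'} Z (Pi.single k 1) ≤ 0)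
    (f : Finset (Fin m) → ℝ)
    (hf : ∀ S : Finset (Fin m),
      f S = ∑ i : I, q i -
        ∑ i : I, q i / (1 + G i (fun j => (if j ∈ S then (1 : ℝ) else 0) * Y i j))) :
    ∀ (A B : Finset (Fin m)), A ⊆ B → ∀ j : Fin m, j ∉ B →
      f (insert j B) - f B ≤ f (insert j A) - f A := by
  intro A B hAB j hjB
  have hjA : j ∉ A := fun h => hjB (hAB h)
  -- coordinate vectors
  set z : I → Finset (Fin m) → (Fin m → ℝ) :=
    fun i S k => (if k ∈ S then (1:ℝ) else 0) * Y i k with hz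
  have hzO : ∀ i S, ∀ k, 0 ≤ z i S k := by
    intro i S k
    by_cases h : k ∈ S <;> simp [hz, h, (hY i k).le]
  have key : ∀ i : I,
      q i / (1 + G i (z i B)) - q i / (1 + G i (z i (insert j B)))
        ≤ q i / (1 + G i (z i A)) - q i / (1 + G i (z i (insert j A))) := by
    intro i
    obtain ⟨hmono, hstep⟩ := gev_core (G i) (hdiff i) (hGpos i) (hGmixed i)
    set v : Fin m → ℝ := fun k => (if k ∈ B ∧ k ∉ A then (1:ℝ) else 0) * Y i k with hv
    have hv0 : ∀ k, 0 ≤ v k := by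
      intro k
      by_cases h : k ∈ B ∧ k ∉ A <;> simp [hv, h, (hY i k).le]
    have hvj : v j = 0 := by simp [hv, hjB]
    set u : Fin m → ℝ := Y i j • (Pi.single j 1 : Fin m → ℝ) with hu
    have hzB : z i B = z i A + v := by
      ext k
      by_cases hA : k ∈ A
      · have hB : k ∈ B := hAB hA
        simp [hz, hv, hA, hB]
      · by_cases hB : k ∈ B <;> simp [hz, hv, hA, hB]
    have hins : ∀ S : Finset (Fin m), j ∉ S → z i (insert j S) = z i S + u := by
      intro S hjS
      ext k
      rcases eq_or_ne k j with rfl | hkj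
      · simp [hz, hu, hjS, Pi.single_apply, mul_comm]
      · simp [hz, hu, hkj, Pi.single_apply]
    have ha : 0 ≤ G i (z i A) := hGnonneg i _ (hzO i A)
    have hab : G i (z i A) ≤ G i (z i B) := by
      rw [hzB]; exact hmono _ _ (hzO i A) hv0
    have haa' : G i (z i A) ≤ G i (z i (insert j A)) := by
      rw [hins A hjA]
      refine hmono _ _ (hzO i A) ?_
      intro k
      simp only [hu, Pi.smul_apply, Pi.single_apply, smul_eq_mul]
      have := (hY i j).le
      positivity
    have hbb' : G i (z i B) ≤ G i (z i (insert j B)) := by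
      rw [hins B hjB]
      refine hmono _ _ (hzO i B) ?_
      intro k
      simp only [hu, Pi.smul_apply, Pi.single_apply, smul_eq_mul]
      have := (hY i j).le
      positivity
    have hsub : G i (z i (insert j B)) - G i (z i B)
        ≤ G i (z i (insert j A)) - G i (z i A) := by
      rw [hins B hjB, hins A hjA, hzB]
      exact hstep (z i A) v (hzO i A) hv0 j hvj (Y i j) (hY i j).le
    have hk := key_ineq ha hab haa' hbb' hsub
    have hq' := (hq i).le
    calc q i / (1 + G i (z i B)) - q i / (1 + G i (z i (insert j B)))
        = q i * (1/(1 + G i (z i B)) - 1/(1 + G i (z i (insert j B)))) := by ring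
      _ ≤ q i * (1/(1 + G i (z i A)) - 1/(1 + G i (z i (insert j A)))) :=
          mul_le_mul_of_nonneg_left hk hq'
      _ = q i / (1 + G i (z i A)) - q i / (1 + G i (z i (insert j A))) := by ring
  have hsum := Finset.sum_le_sum (s := Finset.univ) (fun i _ => key i)
  rw [Finset.sum_sub_distrib, Finset.sum_sub_distrib] at hsum
  rw [hf, hf, hf, hf]
  simp only [hz] at hsum
  linarith
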